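/- Let k ≥ 1 and m ≥ 2k+5 be natural numbers. For every consistent family of k signed edge conditions on Fin m, there exists a simple graph G on Fin m that satisfies every condition in the family and is NOT 2-clique-colorable. (In the paper's terminology: the complement problem (2CC)^c is (2k+5,k)-universal for every k ≥ 1.) -/

import Mathlib

/-- A set of vertices is a maximal clique if it is a clique and no strict
superset of it is a clique. -/
def IsMaximalClique {V : Type*} (G : SimpleGraph V) (s : Set V) : Prop :=
  G.IsClique s ∧ ∀ t : Set V, G.IsClique t → s ⊆ t → s = t

/-- A set of vertices is monochromatic under a 2-coloring `c` if `c` is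
constant on it. -/
def MonochromaticOn {V : Type*} (c : V → Bool) (s : Set V) : Prop :=
  ∀ u ∈ s, ∀ v ∈ s, c u = c v

/-- `G` is 2-clique-colorable if some 2-coloring makes every maximal clique
with at least two vertices nonmonochromatic. -/
def TwoCliqueColorable {V : Type*} (G : SimpleGraph V) : Prop :=
  ∃ c : V → Bool, ∀ s : Set V, IsMaximalClique G s →
    (∃ u ∈ s, ∃ v ∈ s, u ≠ v) → ¬ MonochromaticOn c s

/-- A graph `G` satisfies a signed edge condition `((u, v), sign)` if `u` and
`v` are adjacent when the sign is `true`, and nonadjacent when it is `false`. -/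
def SatisfiesCond {m : ℕ} (G : SimpleGraph (Fin m)) (c : (Fin m × Fin m) × Bool) : Prop :=
  if c.2 = true then G.Adj c.1.1 c.1.2 else ¬ G.Adj c.1.1 c.1.2

/-- (2CC)ᶜ is (2k+5, k)-universal: any consistent family of k signed edge
conditions on `Fin m` (m ≥ 2k+5) has a model that is NOT 2-clique-colorable. -/
theorem twoCC_compl_universal (k m : ℕ) (hk : 1 ≤ k) (hm : 2 * k + 5 ≤ m)
    (cond : Fin k → (Fin m × Fin m) × Bool)
    (hcons : ∃ G : SimpleGraph (Fin m), ∀ i, SatisfiesCond G (cond i)) :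
    ∃ G : SimpleGraph (Fin m),
      (∀ i, SatisfiesCond G (cond i)) ∧ ¬ TwoCliqueColorable G := by
  classical
  obtain ⟨G0, hG0⟩ := hcons
  -- set of vertices mentioned by the conditions
  set S : Finset (Fin m) := Finset.univ.biUnion
    (fun i : Fin k => {(cond i).1.1, (cond i).1.2}) with hSdef
  have hScard : S.card ≤ 2 * k := by
    calc S.card ≤ ∑ i : Fin k, ({(cond i).1.1, (cond i).1.2} : Finset (Fin m)).card :=
          Finset.card_biUnion_le
      _ ≤ ∑ _i : Fin k, 2 := Finset.sum_le_sum (fun i _ => by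
          exact (Finset.card_insert_le _ _).trans (by simp))
      _ = 2 * k := by simp [mul_comm]
  have hcompl : 5 ≤ Sᶜ.card := by
    have h1 : Sᶜ.card = m - S.card := by
      simp [Finset.card_compl]
    omega
  obtain ⟨t, htsub, htcard⟩ := Finset.exists_subset_card_eq hcompl
  let e := t.orderIsoOfFin htcard
  set a : Fin 5 → Fin m := fun j => ((e j : t) : Fin m) with hadef
  have hainj : Function.Injective a := fun i j h => e.injective (Subtype.ext h)
  have haS : ∀ j, a j ∉ S := by
    intro j hj
    have : a j ∈ Sᶜ := htsub (e j).2
    exact (Finset.mem_compl.mp this) hj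
  have hSa : ∀ v ∈ S, ∀ j, v ≠ a j := by
    intro v hv j h
    exact haS j (h ▸ hv)
  -- Fin 5 arithmetic facts
  have f1 : ∀ x : Fin 5, x ≠ x + 1 := by decide
  have f2 : ∀ x : Fin 5, x + 1 + 4 = x := by decide
  have f3 : ∀ x : Fin 5, x + 4 ≠ x + 1 + 1 := by decide
  have f4 : ∀ x : Fin 5, x + 4 ≠ x + 1 := by decide
  -- the pentagon relation
  let R : Fin m → Fin m → Prop := fun u v =>
    ∃ j : Fin 5, (u = a j ∧ v = a (j + 1)) ∨ (v = a j ∧ u = a (j + 1))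
  let G : SimpleGraph (Fin m) :=
    { Adj := fun u v => (G0.Adj u v ∧ (∀ j, u ≠ a j) ∧ (∀ j, v ≠ a j)) ∨ R u v
      symm := by
        constructor
        intro u v h
        rcases h with ⟨h1, h2, h3⟩ | ⟨j, h⟩
        · exact Or.inl ⟨h1.symm, h3, h2⟩
        · exact Or.inr ⟨j, h.symm⟩
      loopless := by
        constructor
        intro u h
        rcases h with ⟨h1, _, _⟩ | ⟨j, ⟨h1, h2⟩ | ⟨h1, h2⟩⟩
        · exact G0.loopless.irrefl u h1
        · exact f1 j (hainj (h1.symm.trans h2))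
        · exact f1 j (hainj (h1.symm.trans h2)) }
  have hGadj : ∀ u v, G.Adj u v ↔
      (G0.Adj u v ∧ (∀ j, u ≠ a j) ∧ (∀ j, v ≠ a j)) ∨ R u v := fun u v => Iff.rfl
  -- neighbors of a j in G
  have hnbr : ∀ (j : Fin 5) (v : Fin m), G.Adj (a j) v → v = a (j + 1) ∨ v = a (j + 4) := by
    intro j v h
    rcases (hGadj _ _).mp h with ⟨_, h2, _⟩ | ⟨i, ⟨h1, h2⟩ | ⟨h1, h2⟩⟩
    · exact absurd rfl (h2 j)
    · have hij : j = i := hainj h1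
      subst hij
      exact Or.inl h2
    · have hij : j = i + 1 := hainj h2
      right
      rw [hij, f2 i] at *
      exact h1
  -- the pentagon edges
  have hadj : ∀ j : Fin 5, G.Adj (a j) (a (j + 1)) := by
    intro j
    exact (hGadj _ _).mpr (Or.inr ⟨j, Or.inl ⟨rfl, rfl⟩⟩)
  -- each pentagon edge is a maximal clique
  have hmax : ∀ j : Fin 5, IsMaximalClique G {a j, a (j + 1)} := by
    intro j
    constructor
    · intro u hu v hv hne
      rcases hu with rfl | hu
      · rcases hv with rfl | hv
        · exact absurd rfl hne
        · rw [Set.mem_singleton_iff] at hv; subst hv; exact hadj j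
      · rw [Set.mem_singleton_iff] at hu; subst hu
        rcases hv with rfl | hv
        · exact (hadj j).symm
        · rw [Set.mem_singleton_iff] at hv; subst hv; exact absurd rfl hne
    · intro u hu hsu
      apply Set.Subset.antisymm hsu
      intro w hw
      by_contra hws
      simp only [Set.mem_insert_iff, Set.mem_singleton_iff, not_or] at hws
      obtain ⟨hw1, hw2⟩ := hws
      have haj : a j ∈ u := hsu (by simp)
      have haj1 : a (j + 1) ∈ u := hsu (by simp)
      have h1 : G.Adj (a j) w := hu haj hw (fun h => hw1 h.symm)
      have h2 : G.Adj (a (j + 1)) w := hu haj1 hw (fun h => hw2 h.symm)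
      rcases hnbr j w h1 with h | h
      · exact hw2 h
      · rcases hnbr (j + 1) w h2 with h' | h'
        · exact f3 j (hainj (h.symm.trans h'))
        · rw [f2 j] at h'
          exact hw1 h'
  refine ⟨G, ?_, ?_⟩
  · -- conditions are satisfied
    intro i
    have hp : (cond i).1.1 ∈ S := Finset.mem_biUnion.mpr ⟨i, Finset.mem_univ i, by simp⟩
    have hq : (cond i).1.2 ∈ S := Finset.mem_biUnion.mpr ⟨i, Finset.mem_univ i, by simp⟩
    have hi := hG0 i
    unfold SatisfiesCond at hi ⊢
    cases hsign : (cond i).2 with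
    | true =>
        rw [hsign] at hi
        simp only [if_pos rfl] at hi ⊢
        exact (hGadj _ _).mpr (Or.inl ⟨hi, hSa _ hp, hSa _ hq⟩)
    | false =>
        rw [hsign] at hi
        simp only [Bool.false_eq_true, if_neg] at hi ⊢
        intro hadj'
        rcases (hGadj _ _).mp hadj' with ⟨h1, _, _⟩ | ⟨j, ⟨h1, h2⟩ | ⟨h1, h2⟩⟩
        · exact hi h1
        · exact hSa _ hp j h1
        · exact hSa _ hp (j + 1) h2
  · -- not 2-clique-colorable
    rintro ⟨c, hc⟩
    have key : ∀ j : Fin 5, c (a (j + 1)) = ! c (a j) := by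
      intro j
      have hnm := hc {a j, a (j + 1)} (hmax j)
        ⟨a j, by simp, a (j + 1), by simp, fun h => f1 j (hainj h)⟩
      by_contra hne2
      apply hnm
      have hceq : c (a j) = c (a (j + 1)) := by
        cases h1 : c (a j) <;> cases h2 : c (a (j + 1)) <;> simp_all
      intro u hu v hv
      rcases hu with rfl | hu
      · rcases hv with rfl | hv
        · rfl
        · rw [Set.mem_singleton_iff] at hv; subst hv; exact hceq
      · rw [Set.mem_singleton_iff] at hu; subst hu
        rcases hv with rfl | hv
        · exact hceq.symm
        · rw [Set.mem_singleton_iff] at hv; subst hv; rfl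
    have k0 := key 0
    have k1 := key 1
    have k2 := key 2
    have k3 := key 3
    have k4 := key 4
    have e01 : (0 : Fin 5) + 1 = 1 := by decide
    have e12 : (1 : Fin 5) + 1 = 2 := by decide
    have e23 : (2 : Fin 5) + 1 = 3 := by decide
    have e34 : (3 : Fin 5) + 1 = 4 := by decide
    have e40 : (4 : Fin 5) + 1 = 0 := by decide
    rw [e01] at k0
    rw [e12, k0] at k1
    rw [e23, k1] at k2
    rw [e34, k2] at k3
    rw [e40, k3] at k4
    simp at k4
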